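/- Let l, m be positive reals with l ≠ m. There is no preorder ≽ on Δ whose restriction to point-mass lotteries satisfies Lines (i.e., δ_(x,y) ≽ δ_(x',y') if and only if y ≥ −l·x + (l·x' + y') and y ≥ −m·x + (m·x' + y')) and which also satisfies Independence, Unidimensional Expectations, and Negative Dominance. -/

import Mathlib

open scoped BigOperators

noncomputable section

/-- A finite-support lottery on `X`. -/
structure Lottery (X : Type*) where
  val : X →₀ ℝ
  nonneg : ∀ x, 0 ≤ val x
  total : val.sum (fun _ p => p) = 1

namespace Lottery

variable {X : Type*}

/-- The point-mass lottery at `x`. -/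
def delta (x : X) : Lottery X where
  val := Finsupp.single x 1
  nonneg := fun y => by
    classical
    rw [Finsupp.single_apply]
    split <;> norm_num
  total := by
    rw [Finsupp.sum_single_index rfl]

/-- The mixture `α • f + (1 - α) • g`. -/
def mix (α : ℝ) (h1 : 0 ≤ α) (h2 : α ≤ 1) (f g : Lottery X) : Lottery X where
  val := α • f.val + (1 - α) • g.val
  nonneg := fun x => by
    have hf := f.nonneg x
    have hg := g.nonneg x
    simp only [Finsupp.coe_add, Finsupp.coe_smul, Pi.add_apply, Pi.smul_apply, smul_eq_mul]
    nlinarith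
  total := by
    rw [Finsupp.sum_add_index' (fun _ => rfl) (fun _ _ _ => rfl)]
    rw [Finsupp.sum_smul_index (fun _ => rfl), Finsupp.sum_smul_index (fun _ => rfl)]
    rw [← Finsupp.mul_sum, ← Finsupp.mul_sum, f.total, g.total]
    ring

/-- The uniform lottery on `a` and `b`, written `a/b` in the paper. -/
def unif (a b : X) : Lottery X := mix (1/2) (by norm_num) (by norm_num) (delta a) (delta b)

/-- Strict preference. -/
def SPref (R : Lottery X → Lottery X → Prop) (f g : Lottery X) : Prop := R f g ∧ ¬ R g f

/-- Indifference. -/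
def Indiff (R : Lottery X → Lottery X → Prop) (f g : Lottery X) : Prop := R f g ∧ R g f

/-- Incomparability. -/
def Incomp (R : Lottery X → Lottery X → Prop) (f g : Lottery X) : Prop := ¬ R f g ∧ ¬ R g f

/-- Negative Dominance. -/
def NegDominance (R : Lottery X → Lottery X → Prop) : Prop :=
  ∀ f g : Lottery X, SPref R f g →
    ∃ o ∈ f.val.support, ∃ o' ∈ g.val.support, SPref R (delta o) (delta o')

/-- Independence. -/
def Independence (R : Lottery X → Lottery X → Prop) : Prop :=
  ∀ f g h : Lottery X, ∀ α : ℝ, ∀ (h1 : 0 < α) (h2 : α < 1),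
    (R f g ↔ R (mix α h1.le h2.le f h) (mix α h1.le h2.le g h))

/-- The coordinatewise expectation of a lottery on `ℝ²`. -/
def expLot (f : Lottery (ℝ × ℝ)) : ℝ × ℝ :=
  (f.val.sum fun o p => p * o.1, f.val.sum fun o p => p * o.2)

/-- Pareto. -/
def Pareto (R : Lottery (ℝ × ℝ) → Lottery (ℝ × ℝ) → Prop) : Prop :=
  ∀ x y x' y' : ℝ, x' ≤ x → y' ≤ y → R (delta (x, y)) (delta (x', y'))

/-- Converse Pareto. -/
def ConvPareto (R : Lottery (ℝ × ℝ) → Lottery (ℝ × ℝ) → Prop) : Prop :=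
  ∀ x y x' y' : ℝ, R (delta (x, y)) (delta (x', y')) → x' ≤ x ∧ y' ≤ y

/-- Two outcomes are unidimensional with each other if they differ in at most one coordinate. -/
def UniWith {A B : Type*} (o o' : A × B) : Prop := o.1 = o'.1 ∨ o.2 = o'.2

/-- A lottery is unidimensional if any two outcomes in its support are unidimensional
with each other. -/
def Unidim {A B : Type*} (f : Lottery (A × B)) : Prop :=
  ∀ o ∈ f.val.support, ∀ o' ∈ f.val.support, UniWith o o'

/-- Expectationalism. -/
def Expectationalism (R : Lottery (ℝ × ℝ) → Lottery (ℝ × ℝ) → Prop) : Prop :=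
  ∀ f, Indiff R f (delta (expLot f))

/-- Unidimensional Expectations. -/
def UnidimExp (R : Lottery (ℝ × ℝ) → Lottery (ℝ × ℝ) → Prop) : Prop :=
  ∀ f, Unidim f → Indiff R f (delta (expLot f))

end Lottery

open Lottery

/-- The `Lines` relation on ℝ² determined by two lines of slopes `-l` and `-m`. -/
def linesRel (l m : ℝ) (p q : ℝ × ℝ) : Prop :=
  -l * p.1 + (l * q.1 + q.2) ≤ p.2 ∧ -m * p.1 + (m * q.1 + q.2) ≤ p.2

section Auxiliary

open Lottery

namespace Lottery

variable {X : Type*}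

theorem ext' {f g : Lottery X} (h : f.val = g.val) : f = g := by
  cases f; cases g; simp_all

theorem mix_val' (α : ℝ) (h1 : 0 ≤ α) (h2 : α ≤ 1) (f g : Lottery X) :
    (mix α h1 h2 f g).val = α • f.val + (1 - α) • g.val := rfl

theorem delta_val' (x : X) : (delta x).val = Finsupp.single x 1 := rfl

theorem mem_mix_delta {α : ℝ} {h1 : 0 ≤ α} {h2 : α ≤ 1} {p q : X} {o : X}
    (ho : o ∈ (mix α h1 h2 (delta p) (delta q)).val.support) : o = p ∨ o = q := by
  classical
  have ho' : o ∈ (α • Finsupp.single p (1:ℝ) + (1 - α) • Finsupp.single q (1:ℝ)).support := ho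
  rcases Finset.mem_union.1 (Finsupp.support_add ho') with h | h
  · exact Or.inl (Finset.mem_singleton.1 (Finsupp.support_single_subset (Finsupp.support_smul h)))
  · exact Or.inr (Finset.mem_singleton.1 (Finsupp.support_single_subset (Finsupp.support_smul h)))

theorem unidim_mix_delta {A B : Type*} (α : ℝ) (h1 : 0 ≤ α) (h2 : α ≤ 1) {p q : A × B}
    (hpq : UniWith p q) : Unidim (mix α h1 h2 (delta p) (delta q)) := by
  intro o ho o' ho'
  rcases mem_mix_delta ho with rfl | rfl <;> rcases mem_mix_delta ho' with rfl | rfl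
  · exact Or.inl rfl
  · exact hpq
  · exact Or.imp Eq.symm Eq.symm hpq
  · exact Or.inl rfl

theorem expLot_mix_delta (α : ℝ) (h1 : 0 ≤ α) (h2 : α ≤ 1) (p q : ℝ × ℝ) :
    expLot (mix α h1 h2 (delta p) (delta q))
      = (α * p.1 + (1 - α) * q.1, α * p.2 + (1 - α) * q.2) := by
  classical
  have hval : (mix α h1 h2 (delta p) (delta q)).val
      = Finsupp.single p α + Finsupp.single q (1 - α) := by
    show α • Finsupp.single p (1:ℝ) + (1 - α) • Finsupp.single q (1:ℝ) = _
    rw [Finsupp.smul_single, Finsupp.smul_single, smul_eq_mul, smul_eq_mul, mul_one, mul_one]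
  have key : ∀ F : (ℝ × ℝ) → ℝ,
      (Finsupp.single p α + Finsupp.single q (1 - α)).sum (fun o t => t * F o)
        = α * F p + (1 - α) * F q := by
    intro F
    rw [Finsupp.sum_add_index' (fun a => zero_mul (F a)) (fun a b₁ b₂ => add_mul b₁ b₂ (F a)),
      Finsupp.sum_single_index (zero_mul (F p)), Finsupp.sum_single_index (zero_mul (F q))]
  unfold expLot
  rw [hval]
  exact Prod.ext (key (fun o => o.1)) (key (fun o => o.2))

theorem collapse {R : Lottery (ℝ × ℝ) → Lottery (ℝ × ℝ) → Prop} (huni : UnidimExp R)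
    (α : ℝ) (h1 : 0 ≤ α) (h2 : α ≤ 1) {x1 y1 x2 y2 X Y : ℝ}
    (hpq : x1 = x2 ∨ y1 = y2) (hX : α * x1 + (1 - α) * x2 = X) (hY : α * y1 + (1 - α) * y2 = Y) :
    Indiff R (mix α h1 h2 (delta (x1, y1)) (delta (x2, y2))) (delta (X, Y)) := by
  have h := huni (mix α h1 h2 (delta (x1, y1)) (delta (x2, y2)))
    (unidim_mix_delta α h1 h2 hpq)
  rw [expLot_mix_delta] at h
  have hpt : ((α * ((x1, y1) : ℝ × ℝ).1 + (1 - α) * ((x2, y2) : ℝ × ℝ).1,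
      α * ((x1, y1) : ℝ × ℝ).2 + (1 - α) * ((x2, y2) : ℝ × ℝ).2) : ℝ × ℝ) = (X, Y) :=
    Prod.ext hX hY
  rwa [hpt] at h

theorem indiff_mix {R : Lottery X → Lottery X → Prop} (hind : Independence R)
    {u u' : Lottery X} (h : Indiff R u u') (α : ℝ) (h1 : 0 ≤ α) (h2 : α ≤ 1)
    (h1' : 0 < α) (h2' : α < 1) (w : Lottery X) :
    Indiff R (mix α h1 h2 u w) (mix α h1 h2 u' w) :=
  ⟨(hind u u' w α h1' h2').1 h.1, (hind u' u w α h1' h2').1 h.2⟩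

theorem indiff_symm {R : Lottery X → Lottery X → Prop} {f g : Lottery X}
    (h : Indiff R f g) : Indiff R g f := ⟨h.2, h.1⟩

theorem indiff_trans {R : Lottery X → Lottery X → Prop} (ht : Transitive R)
    {f g h : Lottery X} (h1 : Indiff R f g) (h2 : Indiff R g h) : Indiff R f h :=
  ⟨ht h1.1 h2.1, ht h2.2 h1.2⟩

theorem mix_half_comm (h1 : (0:ℝ) ≤ 1/2) (h2 : (1:ℝ)/2 ≤ 1) (f g : Lottery X) :
    mix (1/2) h1 h2 f g = mix (1/2) h1 h2 g f := by
  apply ext'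
  show (1/2 : ℝ) • f.val + (1 - 1/2) • g.val = (1/2 : ℝ) • g.val + (1 - 1/2) • f.val
  module

end Lottery

end Auxiliary
namespace Lottery
variable {X : Type*}

theorem mix_exchange {α β γ δ : ℝ} (pα0 : 0 ≤ α) (pα1 : α ≤ 1) (pβ0 : 0 ≤ β) (pβ1 : β ≤ 1)
    (pγ0 : 0 ≤ γ) (pγ1 : γ ≤ 1) (pδ0 : 0 ≤ δ) (pδ1 : δ ≤ 1) (a b c : Lottery X)
    (h1 : α * δ = β * γ) (h2 : α * (1 - δ) = 1 - β) (h3 : 1 - α = β * (1 - γ)) :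
    mix α pα0 pα1 (mix δ pδ0 pδ1 a b) c = mix β pβ0 pβ1 (mix γ pγ0 pγ1 a c) b := by
  apply ext'
  show α • (δ • a.val + (1 - δ) • b.val) + (1 - α) • c.val
    = β • (γ • a.val + (1 - γ) • c.val) + (1 - β) • b.val
  rw [smul_add, smul_add, smul_smul, smul_smul, smul_smul, smul_smul, h1, h2, h3]
  abel

end Lottery
set_option maxHeartbeats 1000000 in
open Lottery in
theorem key_lemma (l m : ℝ) (hl : 0 < l) (hm : 0 < m) (hlm : l < m) :
    ¬ ∃ R : Lottery (ℝ × ℝ) → Lottery (ℝ × ℝ) → Prop,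
      Reflexive R ∧ Transitive R ∧
      (∀ p q : ℝ × ℝ, R (delta p) (delta q) ↔ linesRel l m p q) ∧
      Independence R ∧ UnidimExp R ∧ NegDominance R := by
  rintro ⟨R, _hrefl, htrans, hlines, hind, huni, hnd⟩
  classical
  set s : ℝ := l + m with hs
  have hs0 : 0 < s := by rw [hs]; linarith
  set e : ℝ := (m - l) / (3 * s) with he
  have he0 : 0 < e := by rw [he]; exact div_pos (by linarith) (by linarith)
  have he1 : e < 1 := by
    rw [he, div_lt_one (by linarith)]
    rw [hs]; linarith
  have hes : e * s = (m - l) / 3 := by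
    rw [he]; field_simp
  have hY9 : 9 * (e * s) < 4 * (m - l) := by rw [hes]; linarith
  have hes0 : 0 < e * s := mul_pos he0 hs0
  set b : ℝ := -(s / 2) with hb
  set c : ℝ := -(2 * s) with hc
  set d : ℝ := (1 - e) * c + e * b with hd
  set z2 : ℝ := (c - d) / 2 with hz2
  set w2 : ℝ := (c + d) / 2 with hw2
  set x2 : ℝ := (2 - e) / e with hx2
  set yb : ℝ := (s / 2) * (e / (2 - e)) with hyb
  have h2e : (0:ℝ) < 2 - e := by linarith
  have pθ0 : (0:ℝ) ≤ 1 - e := by linarith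
  have pθ1 : (1:ℝ) - e ≤ 1 := by linarith
  have pγ0 : (0:ℝ) ≤ (1 - e) / (2 - e) := div_nonneg pθ0 h2e.le
  have pγ1 : (1 - e) / (2 - e) ≤ 1 := by rw [div_le_one h2e]; linarith
  have pβ0 : (0:ℝ) ≤ 1 - e / 2 := by linarith
  have pβ1 : (1:ℝ) - e / 2 ≤ 1 := by linarith
  have sβ0 : (0:ℝ) < 1 - e / 2 := by linarith
  have sβ1 : (1:ℝ) - e / 2 < 1 := by linarith
  have pe0 : (0:ℝ) ≤ e / 2 := by linarith
  have pe1 : e / 2 ≤ 1 := by linarith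
  have se0 : (0:ℝ) < e / 2 := by linarith
  have se1 : e / 2 < 1 := by linarith
  have p20 : (0:ℝ) ≤ 1 / 2 := by norm_num
  have p21 : (1:ℝ) / 2 ≤ 1 := by norm_num
  have s20 : (0:ℝ) < 1 / 2 := by norm_num
  have s21 : (1:ℝ) / 2 < 1 := by norm_num
  -- f-side chain
  have hu : Indiff R (mix (1 - e) pθ0 pθ1 (delta ((-1 : ℝ), b)) (delta (x2, b)))
      (delta ((1 : ℝ), b)) := by
    refine collapse huni _ pθ0 pθ1 (Or.inr rfl) ?_ (by ring)
    rw [hx2]; field_simp; ring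
  have hAf : Indiff R
      (mix (1/2) p20 p21 (mix (1 - e) pθ0 pθ1 (delta ((-1 : ℝ), b)) (delta (x2, b)))
        (delta ((-1 : ℝ), -b)))
      (mix (1/2) p20 p21 (delta ((1 : ℝ), b)) (delta ((-1 : ℝ), -b))) :=
    indiff_mix hind hu _ p20 p21 s20 s21 _
  have hv : Indiff R (mix ((1 - e) / (2 - e)) pγ0 pγ1 (delta ((-1 : ℝ), b)) (delta ((-1 : ℝ), -b)))
      (delta ((-1 : ℝ), yb)) := by
    refine collapse huni _ pγ0 pγ1 (Or.inl rfl) (by ring) ?_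
    rw [hyb, hb]; field_simp; ring
  have hf1 : Indiff R
      (mix (1 - e/2) pβ0 pβ1
        (mix ((1 - e) / (2 - e)) pγ0 pγ1 (delta ((-1 : ℝ), b)) (delta ((-1 : ℝ), -b)))
        (delta (x2, b)))
      (mix (1 - e/2) pβ0 pβ1 (delta ((-1 : ℝ), yb)) (delta (x2, b))) :=
    indiff_mix hind hv _ pβ0 pβ1 sβ0 sβ1 _
  have eA : mix (1/2) p20 p21 (mix (1 - e) pθ0 pθ1 (delta ((-1 : ℝ), b)) (delta (x2, b)))
        (delta ((-1 : ℝ), -b))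
      = mix (1 - e/2) pβ0 pβ1
        (mix ((1 - e) / (2 - e)) pγ0 pγ1 (delta ((-1 : ℝ), b)) (delta ((-1 : ℝ), -b)))
        (delta (x2, b)) :=
    mix_exchange p20 p21 pβ0 pβ1 pγ0 pγ1 pθ0 pθ1 _ _ _
      (by field_simp) (by ring) (by field_simp; ring)
  have hff1 : Indiff R (mix (1/2) p20 p21 (delta ((1 : ℝ), b)) (delta ((-1 : ℝ), -b)))
      (mix (1 - e/2) pβ0 pβ1 (delta ((-1 : ℝ), yb)) (delta (x2, b))) := by
    refine indiff_trans htrans (indiff_symm hAf) ?_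
    rw [eA]; exact hf1
  -- g-side chain
  have hu' : Indiff R (mix (1 - e) pθ0 pθ1 (delta ((-1 : ℝ), c)) (delta (x2, c)))
      (delta ((1 : ℝ), c)) := by
    refine collapse huni _ pθ0 pθ1 (Or.inr rfl) ?_ (by ring)
    rw [hx2]; field_simp; ring
  have hAg : Indiff R
      (mix (1/2) p20 p21 (mix (1 - e) pθ0 pθ1 (delta ((-1 : ℝ), c)) (delta (x2, c)))
        (delta ((-1 : ℝ), -d)))
      (mix (1/2) p20 p21 (delta ((1 : ℝ), c)) (delta ((-1 : ℝ), -d))) :=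
    indiff_mix hind hu' _ p20 p21 s20 s21 _
  have hv' : Indiff R
      (mix ((1 - e) / (2 - e)) pγ0 pγ1 (delta ((-1 : ℝ), c)) (delta ((-1 : ℝ), -d)))
      (delta ((-1 : ℝ), yb)) := by
    refine collapse huni _ pγ0 pγ1 (Or.inl rfl) (by ring) ?_
    rw [hyb, hd, hc, hb]; field_simp; ring
  have hg1 : Indiff R
      (mix (1 - e/2) pβ0 pβ1
        (mix ((1 - e) / (2 - e)) pγ0 pγ1 (delta ((-1 : ℝ), c)) (delta ((-1 : ℝ), -d)))
        (delta (x2, c)))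
      (mix (1 - e/2) pβ0 pβ1 (delta ((-1 : ℝ), yb)) (delta (x2, c))) :=
    indiff_mix hind hv' _ pβ0 pβ1 sβ0 sβ1 _
  have eAg : mix (1/2) p20 p21 (mix (1 - e) pθ0 pθ1 (delta ((-1 : ℝ), c)) (delta (x2, c)))
        (delta ((-1 : ℝ), -d))
      = mix (1 - e/2) pβ0 pβ1
        (mix ((1 - e) / (2 - e)) pγ0 pγ1 (delta ((-1 : ℝ), c)) (delta ((-1 : ℝ), -d)))
        (delta (x2, c)) :=
    mix_exchange p20 p21 pβ0 pβ1 pγ0 pγ1 pθ0 pθ1 _ _ _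
      (by field_simp) (by ring) (by field_simp; ring)
  have hgg1 : Indiff R (mix (1/2) p20 p21 (delta ((1 : ℝ), c)) (delta ((-1 : ℝ), -d)))
      (mix (1 - e/2) pβ0 pβ1 (delta ((-1 : ℝ), yb)) (delta (x2, c))) := by
    refine indiff_trans htrans (indiff_symm hAg) ?_
    rw [eAg]; exact hg1
  -- point comparison
  have hbc : c < b := by rw [hb, hc]; linarith
  have hPQ : R (delta (x2, b)) (delta (x2, c)) := by
    refine (hlines (x2, b) (x2, c)).2 ⟨?_, ?_⟩
    · show -l * x2 + (l * x2 + c) ≤ b; linarith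
    · show -m * x2 + (m * x2 + c) ≤ b; linarith
  have hQP : ¬ R (delta (x2, c)) (delta (x2, b)) := by
    intro h
    have h2 : -l * x2 + (l * x2 + b) ≤ c := ((hlines _ _).1 h).1
    linarith
  have eP : mix (1 - e/2) pβ0 pβ1 (delta ((-1 : ℝ), yb)) (delta (x2, b))
      = mix (e/2) pe0 pe1 (delta (x2, b)) (delta ((-1 : ℝ), yb)) := by
    apply ext'
    simp only [mix_val', delta_val']
    module
  have eQ : mix (1 - e/2) pβ0 pβ1 (delta ((-1 : ℝ), yb)) (delta (x2, c))
      = mix (e/2) pe0 pe1 (delta (x2, c)) (delta ((-1 : ℝ), yb)) := by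
    apply ext'
    simp only [mix_val', delta_val']
    module
  have hR1 : R (mix (1 - e/2) pβ0 pβ1 (delta ((-1 : ℝ), yb)) (delta (x2, b)))
      (mix (1 - e/2) pβ0 pβ1 (delta ((-1 : ℝ), yb)) (delta (x2, c))) := by
    rw [eP, eQ]
    exact (hind _ _ _ (e/2) se0 se1).1 hPQ
  have hR2 : ¬ R (mix (1 - e/2) pβ0 pβ1 (delta ((-1 : ℝ), yb)) (delta (x2, c)))
      (mix (1 - e/2) pβ0 pβ1 (delta ((-1 : ℝ), yb)) (delta (x2, b))) := by
    intro h
    rw [eP, eQ] at h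
    exact hQP ((hind _ _ _ (e/2) se0 se1).2 h)
  have hRfg : R (mix (1/2) p20 p21 (delta ((1 : ℝ), b)) (delta ((-1 : ℝ), -b)))
      (mix (1/2) p20 p21 (delta ((1 : ℝ), c)) (delta ((-1 : ℝ), -d))) :=
    htrans hff1.1 (htrans hR1 hgg1.2)
  have hnRgf : ¬ R (mix (1/2) p20 p21 (delta ((1 : ℝ), c)) (delta ((-1 : ℝ), -d)))
      (mix (1/2) p20 p21 (delta ((1 : ℝ), b)) (delta ((-1 : ℝ), -b))) := by
    intro h
    exact hR2 (htrans (htrans hgg1.2 h) hff1.1)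
  -- X chain: X ~ g
  have hu1 : Indiff R (mix (1/2) p20 p21 (delta ((2 : ℝ), z2 + w2)) (delta ((2 : ℝ), z2)))
      (delta ((2 : ℝ), z2 + w2 / 2)) :=
    collapse huni _ p20 p21 (Or.inl rfl) (by ring) (by ring)
  have hu2 : Indiff R (mix (1/2) p20 p21 (delta ((-2 : ℝ), z2 - w2)) (delta ((-2 : ℝ), z2)))
      (delta ((-2 : ℝ), z2 - w2 / 2)) :=
    collapse huni _ p20 p21 (Or.inl rfl) (by ring) (by ring)
  have hr : Indiff R (mix (1/2) p20 p21 (delta ((2 : ℝ), z2)) (delta ((-2 : ℝ), z2)))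
      (delta ((0 : ℝ), z2)) :=
    collapse huni _ p20 p21 (Or.inr rfl) (by ring) (by ring)
  have hr' : Indiff R (mix (1/2) p20 p21 (delta ((0 : ℝ), z2 + w2)) (delta ((0 : ℝ), z2 - w2)))
      (delta ((0 : ℝ), z2)) :=
    collapse huni _ p20 p21 (Or.inl rfl) (by ring) (by ring)
  have ht1 : Indiff R (mix (1/2) p20 p21 (delta ((2 : ℝ), z2 + w2)) (delta ((0 : ℝ), z2 + w2)))
      (delta ((1 : ℝ), z2 + w2)) :=
    collapse huni _ p20 p21 (Or.inr rfl) (by ring) (by ring)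
  have ht2 : Indiff R (mix (1/2) p20 p21 (delta ((-2 : ℝ), z2 - w2)) (delta ((0 : ℝ), z2 - w2)))
      (delta ((-1 : ℝ), z2 - w2)) :=
    collapse huni _ p20 p21 (Or.inr rfl) (by ring) (by ring)
  have st1 : Indiff R
      (mix (1/2) p20 p21 (mix (1/2) p20 p21 (delta ((2 : ℝ), z2 + w2)) (delta ((2 : ℝ), z2)))
        (delta ((-2 : ℝ), z2 - w2 / 2)))
      (mix (1/2) p20 p21 (delta ((2 : ℝ), z2 + w2 / 2)) (delta ((-2 : ℝ), z2 - w2 / 2))) :=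
    indiff_mix hind hu1 _ p20 p21 s20 s21 _
  have st2 : Indiff R
      (mix (1/2) p20 p21 (mix (1/2) p20 p21 (delta ((-2 : ℝ), z2 - w2)) (delta ((-2 : ℝ), z2)))
        (mix (1/2) p20 p21 (delta ((2 : ℝ), z2 + w2)) (delta ((2 : ℝ), z2))))
      (mix (1/2) p20 p21 (delta ((-2 : ℝ), z2 - w2 / 2))
        (mix (1/2) p20 p21 (delta ((2 : ℝ), z2 + w2)) (delta ((2 : ℝ), z2)))) :=
    indiff_mix hind hu2 _ p20 p21 s20 s21 _
  have e1 : mix (1/2) p20 p21 (delta ((-2 : ℝ), z2 - w2 / 2))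
        (mix (1/2) p20 p21 (delta ((2 : ℝ), z2 + w2)) (delta ((2 : ℝ), z2)))
      = mix (1/2) p20 p21 (mix (1/2) p20 p21 (delta ((2 : ℝ), z2 + w2)) (delta ((2 : ℝ), z2)))
        (delta ((-2 : ℝ), z2 - w2 / 2)) := mix_half_comm p20 p21 _ _
  have st3 : Indiff R
      (mix (1/2) p20 p21 (mix (1/2) p20 p21 (delta ((2 : ℝ), z2)) (delta ((-2 : ℝ), z2)))
        (mix (1/2) p20 p21 (delta ((2 : ℝ), z2 + w2)) (delta ((-2 : ℝ), z2 - w2))))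
      (mix (1/2) p20 p21 (delta ((0 : ℝ), z2))
        (mix (1/2) p20 p21 (delta ((2 : ℝ), z2 + w2)) (delta ((-2 : ℝ), z2 - w2)))) :=
    indiff_mix hind hr _ p20 p21 s20 s21 _
  have e2 : mix (1/2) p20 p21 (mix (1/2) p20 p21 (delta ((-2 : ℝ), z2 - w2)) (delta ((-2 : ℝ), z2)))
        (mix (1/2) p20 p21 (delta ((2 : ℝ), z2 + w2)) (delta ((2 : ℝ), z2)))
      = mix (1/2) p20 p21 (mix (1/2) p20 p21 (delta ((2 : ℝ), z2)) (delta ((-2 : ℝ), z2)))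
        (mix (1/2) p20 p21 (delta ((2 : ℝ), z2 + w2)) (delta ((-2 : ℝ), z2 - w2))) := by
    apply ext'
    simp only [mix_val', delta_val']
    module
  have st4 : Indiff R
      (mix (1/2) p20 p21 (mix (1/2) p20 p21 (delta ((0 : ℝ), z2 + w2)) (delta ((0 : ℝ), z2 - w2)))
        (mix (1/2) p20 p21 (delta ((2 : ℝ), z2 + w2)) (delta ((-2 : ℝ), z2 - w2))))
      (mix (1/2) p20 p21 (delta ((0 : ℝ), z2))
        (mix (1/2) p20 p21 (delta ((2 : ℝ), z2 + w2)) (delta ((-2 : ℝ), z2 - w2)))) :=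
    indiff_mix hind hr' _ p20 p21 s20 s21 _
  have e3 : mix (1/2) p20 p21 (mix (1/2) p20 p21 (delta ((0 : ℝ), z2 + w2)) (delta ((0 : ℝ), z2 - w2)))
        (mix (1/2) p20 p21 (delta ((2 : ℝ), z2 + w2)) (delta ((-2 : ℝ), z2 - w2)))
      = mix (1/2) p20 p21
        (mix (1/2) p20 p21 (delta ((2 : ℝ), z2 + w2)) (delta ((0 : ℝ), z2 + w2)))
        (mix (1/2) p20 p21 (delta ((-2 : ℝ), z2 - w2)) (delta ((0 : ℝ), z2 - w2))) := by
    apply ext'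
    simp only [mix_val', delta_val']
    module
  have st5 : Indiff R
      (mix (1/2) p20 p21
        (mix (1/2) p20 p21 (delta ((2 : ℝ), z2 + w2)) (delta ((0 : ℝ), z2 + w2)))
        (mix (1/2) p20 p21 (delta ((-2 : ℝ), z2 - w2)) (delta ((0 : ℝ), z2 - w2))))
      (mix (1/2) p20 p21 (delta ((1 : ℝ), z2 + w2))
        (mix (1/2) p20 p21 (delta ((-2 : ℝ), z2 - w2)) (delta ((0 : ℝ), z2 - w2)))) :=
    indiff_mix hind ht1 _ p20 p21 s20 s21 _
  have e4 : mix (1/2) p20 p21 (delta ((1 : ℝ), z2 + w2))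
        (mix (1/2) p20 p21 (delta ((-2 : ℝ), z2 - w2)) (delta ((0 : ℝ), z2 - w2)))
      = mix (1/2) p20 p21
        (mix (1/2) p20 p21 (delta ((-2 : ℝ), z2 - w2)) (delta ((0 : ℝ), z2 - w2)))
        (delta ((1 : ℝ), z2 + w2)) := mix_half_comm p20 p21 _ _
  have st6 : Indiff R
      (mix (1/2) p20 p21
        (mix (1/2) p20 p21 (delta ((-2 : ℝ), z2 - w2)) (delta ((0 : ℝ), z2 - w2)))
        (delta ((1 : ℝ), z2 + w2)))
      (mix (1/2) p20 p21 (delta ((-1 : ℝ), z2 - w2)) (delta ((1 : ℝ), z2 + w2))) :=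
    indiff_mix hind ht2 _ p20 p21 s20 s21 _
  have e5 : mix (1/2) p20 p21 (delta ((-1 : ℝ), z2 - w2)) (delta ((1 : ℝ), z2 + w2))
      = mix (1/2) p20 p21 (delta ((1 : ℝ), c)) (delta ((-1 : ℝ), -d)) := by
    have h1 : ((1 : ℝ), z2 + w2) = ((1 : ℝ), c) := Prod.ext rfl (by rw [hz2, hw2]; ring)
    have h2 : ((-1 : ℝ), z2 - w2) = ((-1 : ℝ), -d) := Prod.ext rfl (by rw [hz2, hw2]; ring)
    rw [h1, h2]
    exact mix_half_comm p20 p21 _ _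
  -- assemble X ~ g
  have i1 : Indiff R
      (mix (1/2) p20 p21 (delta ((2 : ℝ), z2 + w2 / 2)) (delta ((-2 : ℝ), z2 - w2 / 2)))
      (mix (1/2) p20 p21 (mix (1/2) p20 p21 (delta ((-2 : ℝ), z2 - w2)) (delta ((-2 : ℝ), z2)))
        (mix (1/2) p20 p21 (delta ((2 : ℝ), z2 + w2)) (delta ((2 : ℝ), z2)))) := by
    refine indiff_trans htrans (indiff_symm st1) ?_
    rw [← e1]
    exact indiff_symm st2
  have i2 : Indiff R
      (mix (1/2) p20 p21 (delta ((2 : ℝ), z2 + w2 / 2)) (delta ((-2 : ℝ), z2 - w2 / 2)))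
      (mix (1/2) p20 p21 (delta ((0 : ℝ), z2))
        (mix (1/2) p20 p21 (delta ((2 : ℝ), z2 + w2)) (delta ((-2 : ℝ), z2 - w2)))) := by
    refine indiff_trans htrans ?_ st3
    rw [← e2]
    exact i1
  have i3 : Indiff R
      (mix (1/2) p20 p21 (delta ((2 : ℝ), z2 + w2 / 2)) (delta ((-2 : ℝ), z2 - w2 / 2)))
      (mix (1/2) p20 p21 (delta ((1 : ℝ), z2 + w2))
        (mix (1/2) p20 p21 (delta ((-2 : ℝ), z2 - w2)) (delta ((0 : ℝ), z2 - w2)))) := by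
    refine indiff_trans htrans ?_ st5
    rw [← e3]
    exact indiff_trans htrans i2 (indiff_symm st4)
  have hXg : Indiff R
      (mix (1/2) p20 p21 (delta ((2 : ℝ), z2 + w2 / 2)) (delta ((-2 : ℝ), z2 - w2 / 2)))
      (mix (1/2) p20 p21 (delta ((1 : ℝ), c)) (delta ((-1 : ℝ), -d))) := by
    rw [← e5]
    refine indiff_trans htrans ?_ st6
    rw [← e4]
    exact i3
  -- strict preference f > X
  have hSP : SPref R (mix (1/2) p20 p21 (delta ((1 : ℝ), b)) (delta ((-1 : ℝ), -b)))
      (mix (1/2) p20 p21 (delta ((2 : ℝ), z2 + w2 / 2)) (delta ((-2 : ℝ), z2 - w2 / 2))) := by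
    constructor
    · exact htrans hRfg hXg.2
    · intro h
      exact hnRgf (htrans hXg.2 h)
  obtain ⟨o, ho, o', ho', hoo'⟩ := hnd _ _ hSP
  have hq1v : z2 + w2 / 2 = -s - (3/8) * (e * s) := by
    rw [hz2, hw2, hd, hc, hb]; ring
  have hq2v : z2 - w2 / 2 = s - (9/8) * (e * s) := by
    rw [hz2, hw2, hd, hc, hb]; ring
  have hlr := (hlines _ _).1 hoo'.1
  rcases mem_mix_delta ho with rfl | rfl <;> rcases mem_mix_delta ho' with rfl | rfl
  · -- p1 vs q1 : use the m-line
    have h2 : -m * 1 + (m * 2 + (z2 + w2 / 2)) ≤ b := hlr.2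
    rw [hq1v, hb] at h2
    rw [hs] at h2
    linarith
  · -- p1 vs q2 : use the l-line
    have h2 : -l * 1 + (l * (-2) + (z2 - w2 / 2)) ≤ b := hlr.1
    rw [hq2v, hb] at h2
    rw [hs] at h2
    linarith
  · -- p2 vs q1 : use the m-line
    have h2 : -m * (-1) + (m * 2 + (z2 + w2 / 2)) ≤ -b := hlr.2
    rw [hq1v, hb] at h2
    rw [hs] at h2
    linarith
  · -- p2 vs q2 : use the l-line
    have h2 : -l * (-1) + (l * (-2) + (z2 - w2 / 2)) ≤ -b := hlr.1
    rw [hq2v, hb] at h2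
    rw [hs] at h2
    linarith
/-- For positive `l ≠ m`, there is no preorder on Δ whose restriction to
point masses satisfies Lines and which also satisfies Independence, Unidimensional
Expectations, and Negative Dominance. -/
theorem statement5 (l m : ℝ) (hl : 0 < l) (hm : 0 < m) (hlm : l ≠ m) :
    ¬ ∃ R : Lottery (ℝ × ℝ) → Lottery (ℝ × ℝ) → Prop,
      Reflexive R ∧ Transitive R ∧
      (∀ p q : ℝ × ℝ, R (delta p) (delta q) ↔ linesRel l m p q) ∧
      Independence R ∧ UnidimExp R ∧ NegDominance R := by
  rcases hlm.lt_or_gt with h | h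
  · exact key_lemma l m hl hm h
  · rintro ⟨R, h1, h2, h3, h4, h5, h6⟩
    exact key_lemma m l hm hl h ⟨R, h1, h2, fun p q => (h3 p q).trans and_comm, h4, h5, h6⟩
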